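/- In the Post-Boundary strategy, let G̃ be the No-Boundary overlay graph of G (satisfying d_{G̃}(b_1,b_2) = d_G(b_1,b_2) for boundary pairs by Theorem 1), and form G'_i from the induced subgraph G_i by inserting edges (b_1, b_2) of weight d_{G̃}(b_1, b_2) for all b_1, b_2 ∈ B_i. Then for all s, t ∈ G_i, d_{G'_i}(s, t) = d_G(s, t). -/

import Mathlib

open scoped ENNReal Classical

namespace PSP

/-- A weighted undirected graph: symmetric adjacency and a weight function
with values in `ℝ≥0∞` (so weights are non-negative). -/
structure WGraph (V : Type*) where
  Adj : V → V → Prop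
  symm : ∀ {u v}, Adj u v → Adj v u
  w : V → V → ℝ≥0∞

variable {V : Type*} {ι : Type*}

/-- Sum of `f` over consecutive pairs of a list. -/
noncomputable def pairSum (f : V → V → ℝ≥0∞) : List V → ℝ≥0∞
  | a :: b :: rest => f a b + pairSum f (b :: rest)
  | _ => 0

/-- Weighted length of a walk (given as a list of vertices). -/
noncomputable def wlen (G : WGraph V) (l : List V) : ℝ≥0∞ := pairSum G.w l

/-- `l` is a walk in `G` from `s` to `t`: consecutive vertices are adjacent,
the first vertex is `s` and the last is `t`. -/
def IsWalk (G : WGraph V) (s t : V) (l : List V) : Prop :=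
  l.Chain' G.Adj ∧ l.head? = some s ∧ l.getLast? = some t

/-- Shortest-path distance in `G` (`⊤` if no walk exists). -/
noncomputable def dist (G : WGraph V) (s t : V) : ℝ≥0∞ :=
  sInf {x | ∃ l, IsWalk G s t l ∧ wlen G l = x}

/-- Induced subgraph on a vertex set `S`. -/
def induce (G : WGraph V) (S : Set V) : WGraph V where
  Adj u v := G.Adj u v ∧ u ∈ S ∧ v ∈ S
  symm h := ⟨G.symm h.1, h.2.2, h.2.1⟩
  w := G.w

/-- A partition of the vertex set is given by a function `P : V → ι`
assigning each vertex its partition index. The set of all boundary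
vertices: vertices having a neighbor in another partition. -/
def bdry (G : WGraph V) (P : V → ι) : Set V :=
  {v | ∃ u, G.Adj v u ∧ P u ≠ P v}

/-- Boundary vertices of partition `i`. -/
def bdryIn (G : WGraph V) (P : V → ι) (i : ι) : Set V :=
  {v | P v = i ∧ ∃ u, G.Adj v u ∧ P u ≠ i}

/-- The induced subgraph `G_i` of partition `i`. -/
def partGraph (G : WGraph V) (P : V → ι) (i : ι) : WGraph V :=
  induce G {x | P x = i}

/-- The No-Boundary overlay graph `G̃`: vertices are boundary vertices; for each
partition, each boundary pair gets an edge of weight equal to the *local*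
partition distance; inter-partition edges of `G` keep their original weight. -/
noncomputable def overlay (G : WGraph V) (P : V → ι) : WGraph V where
  Adj u v := (P u = P v ∧ u ∈ bdry G P ∧ v ∈ bdry G P) ∨ (P u ≠ P v ∧ G.Adj u v)
  symm := by
    rintro u v (⟨h1, h2, h3⟩ | ⟨h1, h2⟩)
    · exact Or.inl ⟨h1.symm, h3, h2⟩
    · exact Or.inr ⟨fun h => h1 h.symm, G.symm h2⟩
  w u v := if P u = P v then dist (partGraph G P (P u)) u v else G.w u v

/-- A half-connected boundary vertex: has a non-boundary neighbor in its own partition. -/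
def halfC (G : WGraph V) (P : V → ι) (b : V) : Prop :=
  b ∈ bdry G P ∧ ∃ u, G.Adj b u ∧ P u = P b ∧ u ∉ bdry G P

/-- A full-connected boundary vertex: all in-partition neighbors are boundary vertices. -/
def fullC (G : WGraph V) (P : V → ι) (b : V) : Prop :=
  b ∈ bdry G P ∧ ∀ u, G.Adj b u → P u = P b → u ∈ bdry G P

/-- The pruned overlay graph `G̃'`, with inserted boundary-pair weights `ω`:
edges among half-connected boundary pairs of the same partition (weight `ω`),
all inter-partition edges, and the original in-partition adjacent edges of
full-connected boundary vertices. -/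
noncomputable def pruned (G : WGraph V) (P : V → ι) (ω : V → V → ℝ≥0∞) : WGraph V where
  Adj u v :=
    (P u = P v ∧ halfC G P u ∧ halfC G P v) ∨
    (P u ≠ P v ∧ G.Adj u v) ∨
    (P u = P v ∧ G.Adj u v ∧ u ∈ bdry G P ∧ v ∈ bdry G P ∧ (fullC G P u ∨ fullC G P v))
  symm := by
    rintro u v (⟨h1, h2, h3⟩ | ⟨h1, h2⟩ | ⟨h1, h2, h3, h4, h5⟩)
    · exact Or.inl ⟨h1.symm, h3, h2⟩
    · exact Or.inr (Or.inl ⟨fun h => h1 h.symm, G.symm h2⟩)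
    · exact Or.inr (Or.inr ⟨h1.symm, G.symm h2, h4, h3, h5.symm⟩)
  w u v := if P u = P v ∧ halfC G P u ∧ halfC G P v then ω u v else G.w u v

/-- The augmented partition graph `G'_i`: the induced subgraph `G_i` plus, for each
boundary pair `b₁ b₂ ∈ B_i`, an inserted edge of weight `ω b₁ b₂` (taking the
minimum with an already-existing edge weight). -/
noncomputable def augment (G : WGraph V) (P : V → ι) (i : ι) (ω : V → V → ℝ≥0∞) : WGraph V where
  Adj u v := (G.Adj u v ∧ P u = i ∧ P v = i) ∨ (u ∈ bdryIn G P i ∧ v ∈ bdryIn G P i)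
  symm := by
    rintro u v (⟨h1, h2, h3⟩ | ⟨h1, h2⟩)
    · exact Or.inl ⟨G.symm h1, h3, h2⟩
    · exact Or.inr ⟨h2, h1⟩
  w u v :=
    if u ∈ bdryIn G P i ∧ v ∈ bdryIn G P i then
      (if G.Adj u v ∧ P u = i ∧ P v = i then min (ω u v) (G.w u v) else ω u v)
    else G.w u v

/-- Graph obtained from `G` by adding, for every pair `u v ∈ S`, a shortcut edge
of weight `dist G u v` (taking the minimum with an already-existing edge weight). -/
noncomputable def shortcut (G : WGraph V) (S : Set V) : WGraph V where
  Adj u v := G.Adj u v ∨ (u ∈ S ∧ v ∈ S)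
  symm := by
    rintro u v (h | ⟨h1, h2⟩)
    · exact Or.inl (G.symm h)
    · exact Or.inr ⟨h2, h1⟩
  w u v :=
    if u ∈ S ∧ v ∈ S then
      (if G.Adj u v then min (dist G u v) (G.w u v) else dist G u v)
    else G.w u v

/-- Vertex-splitting construction: each cut vertex `x ∈ X` keeps its neighbors in
group `N x 0`; for `1 ≤ i ≤ l x` a duplicate `(x, i)` is created, connected to the
vertices of `N x i` with the original weights and to `x` by a zero-weight edge. -/
noncomputable def split (G : WGraph V) (X : Set V) (N : V → ℕ → Set V) (l : V → ℕ) :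
    WGraph (V ⊕ V × ℕ) where
  Adj a b := match a, b with
    | .inl u, .inl v => G.Adj u v ∧ (u ∈ X → v ∈ N u 0) ∧ (v ∈ X → u ∈ N v 0)
    | .inl v, .inr (x, i) => x ∈ X ∧ 1 ≤ i ∧ i ≤ l x ∧ ((G.Adj x v ∧ v ∈ N x i) ∨ v = x)
    | .inr (x, i), .inl v => x ∈ X ∧ 1 ≤ i ∧ i ≤ l x ∧ ((G.Adj x v ∧ v ∈ N x i) ∨ v = x)
    | .inr _, .inr _ => False
  symm := by
    rintro (u | ⟨x, i⟩) (v | ⟨y, j⟩) h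
    · exact ⟨G.symm h.1, h.2.2, h.2.1⟩
    · exact h
    · exact h
    · exact h.elim
  w a b := match a, b with
    | .inl u, .inl v => G.w u v
    | .inl v, .inr (x, _) => if v = x then 0 else G.w x v
    | .inr (x, _), .inl v => if v = x then 0 else G.w x v
    | .inr _, .inr _ => 0



section Aux

lemma pairSum_append (f : V → V → ℝ≥0∞) (u : V) :
    ∀ (l : List V), l.getLast? = some u → ∀ m : List V,
      pairSum f (l ++ m) = pairSum f l + pairSum f (u :: m)
  | [], h, m => by simp at h
  | [a], h, m => by
      simp only [List.getLast?_singleton, Option.some.injEq] at h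
      obtain rfl : u = a := h.symm
      show pairSum f (u :: m) = pairSum f [u] + pairSum f (u :: m)
      have h0 : pairSum f [u] = 0 := rfl
      rw [h0, zero_add]
  | a :: b :: rest, h, m => by
      have h' : (b :: rest).getLast? = some u := by
        rw [List.getLast?_cons_cons] at h; exact h
      show f a b + pairSum f ((b :: rest) ++ m)
          = (f a b + pairSum f (b :: rest)) + pairSum f (u :: m)
      rw [pairSum_append f u (b :: rest) h' m, add_assoc]

lemma isWalk_single (G : WGraph V) (s : V) : IsWalk G s s [s] :=
  ⟨List.isChain_singleton s, rfl, rfl⟩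

lemma dist_le_wlen (G : WGraph V) {s t : V} {l : List V} (h : IsWalk G s t l) :
    dist G s t ≤ wlen G l :=
  sInf_le ⟨l, h, rfl⟩

lemma dist_self (G : WGraph V) (s : V) : dist G s s = 0 :=
  le_antisymm (by simpa [wlen, pairSum] using dist_le_wlen G (isWalk_single G s)) zero_le

lemma dist_le_w (G : WGraph V) {s t : V} (h : G.Adj s t) : dist G s t ≤ G.w s t := by
  have hw : IsWalk G s t [s, t] := ⟨List.isChain_pair.mpr h, rfl, rfl⟩
  have h1 : wlen G [s, t] = G.w s t := by
    show G.w s t + pairSum G.w [t] = G.w s t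
    have h0 : pairSum G.w [t] = 0 := rfl
    rw [h0, add_zero]
  simpa [h1] using dist_le_wlen G hw

lemma le_sInf_add' {c : ℝ≥0∞} {A B : Set ℝ≥0∞}
    (h : ∀ a ∈ A, ∀ b ∈ B, c ≤ a + b) : c ≤ sInf A + sInf B := by
  rw [sInf_eq_iInf' A, sInf_eq_iInf' B, ENNReal.iInf_add]
  refine le_iInf fun a => ?_
  rw [ENNReal.add_iInf]
  exact le_iInf fun b => h a a.2 b b.2

lemma isWalk_append (G : WGraph V) {s u t : V} {l1 l2 : List V}
    (h1 : IsWalk G s u l1) (h2 : IsWalk G u t l2) :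
    IsWalk G s t (l1 ++ l2.tail) ∧ wlen G (l1 ++ l2.tail) = wlen G l1 + wlen G l2 := by
  obtain ⟨hc1, hh1, hg1⟩ := h1
  obtain ⟨hc2, hh2, hg2⟩ := h2
  obtain ⟨m, rfl⟩ : ∃ m, l2 = u :: m := by
    cases l2 with
    | nil => simp at hh2
    | cons a m =>
      simp only [List.head?_cons, Option.some.injEq] at hh2
      exact ⟨m, by rw [hh2]⟩
  have hl1ne : l1 ≠ [] := by rintro rfl; simp at hh1
  constructor
  · refine ⟨List.isChain_append.mpr ⟨hc1, hc2.tail, ?_⟩, ?_, ?_⟩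
    · intro x hx y hy
      rw [hg1, Option.mem_def, Option.some.injEq] at hx
      subst hx
      exact (List.isChain_cons.mp hc2).1 y hy
    · rw [List.head?_append_of_ne_nil _ hl1ne]; exact hh1
    · cases m with
      | nil =>
        simp only [List.tail_cons, List.append_nil]
        simp only [List.getLast?_singleton, Option.some.injEq] at hg2
        rw [hg1, hg2]
      | cons b m' =>
        rw [List.tail_cons, List.getLast?_append]
        rw [List.getLast?_cons_cons] at hg2
        rw [hg2]
        rfl
  · show pairSum G.w (l1 ++ (u :: m).tail) = pairSum G.w l1 + pairSum G.w (u :: m)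
    rw [List.tail_cons]
    exact pairSum_append G.w u l1 hg1 m

lemma dist_triangle (G : WGraph V) (s u t : V) :
    dist G s t ≤ dist G s u + dist G u t := by
  refine le_sInf_add' ?_
  rintro a ⟨l1, h1, rfl⟩ b ⟨l2, h2, rfl⟩
  obtain ⟨hw, heq⟩ := isWalk_append G h1 h2
  calc dist G s t ≤ wlen G (l1 ++ l2.tail) := dist_le_wlen G hw
    _ = wlen G l1 + wlen G l2 := heq

/-- If every edge of `H` is at least as long as the `G`-distance between its
endpoints, then `G`-distances are bounded by `H`-distances. -/
lemma dist_mono_of_edge_bound {G H : WGraph V}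
    (h : ∀ u v, H.Adj u v → dist G u v ≤ H.w u v) (s t : V) :
    dist G s t ≤ dist H s t := by
  refine le_sInf ?_
  rintro x ⟨l, hw, rfl⟩
  induction l generalizing s with
  | nil => simp [IsWalk] at hw
  | cons a l ih =>
    obtain ⟨hc, hh, hg⟩ := hw
    simp only [List.head?_cons, Option.some.injEq] at hh
    obtain rfl : s = a := hh.symm
    cases l with
    | nil =>
      simp only [List.getLast?_singleton, Option.some.injEq] at hg
      subst hg
      simp [dist_self, wlen, pairSum]
    | cons b m =>
      have hadj : H.Adj s b := (List.isChain_cons_cons.mp hc).1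
      have hrec : dist G b t ≤ wlen H (b :: m) := by
        refine ih b ⟨(List.isChain_cons_cons.mp hc).2, rfl, ?_⟩
        rw [List.getLast?_cons_cons] at hg; exact hg
      calc dist G s t ≤ dist G s b + dist G b t := dist_triangle G s b t
        _ ≤ H.w s b + wlen H (b :: m) := add_le_add (h s b hadj) hrec
        _ = wlen H (s :: b :: m) := rfl

lemma bdryIn_subset_bdry (G : WGraph V) (P : V → ι) (i : ι) :
    bdryIn G P i ⊆ bdry G P := by
  rintro v ⟨hv, u, hadj, hu⟩
  exact ⟨u, hadj, by rw [hv]; exact hu⟩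

lemma exists_first_split (Q : V → Prop) :
    ∀ l : List V, (∃ x ∈ l, Q x) →
      ∃ l1 w l2, l = l1 ++ w :: l2 ∧ Q w ∧ ∀ x ∈ l1, ¬ Q x := by
  intro l
  induction l with
  | nil => simp
  | cons a l ih =>
    intro h
    by_cases ha : Q a
    · exact ⟨[], a, l, rfl, ha, by simp⟩
    · have hl : ∃ x ∈ l, Q x := by
        obtain ⟨x, hx, hQ⟩ := h
        rcases List.mem_cons.mp hx with rfl | hx'
        · exact absurd hQ ha
        · exact ⟨x, hx', hQ⟩
      obtain ⟨l1, w, l2, rfl, h1, h2⟩ := ih hl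
      refine ⟨a :: l1, w, l2, rfl, h1, ?_⟩
      intro x hx
      rcases List.mem_cons.mp hx with rfl | hx'
      · exact ha
      · exact h2 x hx'

lemma augment_w_le {G : WGraph V} {P : V → ι} {i : ι} {ω : V → V → ℝ≥0∞} {u v : V}
    (h : G.Adj u v) (hu : P u = i) (hv : P v = i) :
    (augment G P i ω).w u v ≤ G.w u v := by
  show (if u ∈ bdryIn G P i ∧ v ∈ bdryIn G P i then
      (if G.Adj u v ∧ P u = i ∧ P v = i then min (ω u v) (G.w u v) else ω u v)
    else G.w u v) ≤ G.w u v
  split_ifs with h1 h2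
  · exact min_le_right _ _
  · exact absurd ⟨h, hu, hv⟩ h2
  · exact le_rfl

lemma augment_w_le_omega {G : WGraph V} {P : V → ι} {i : ι} {ω : V → V → ℝ≥0∞} {u v : V}
    (hu : u ∈ bdryIn G P i) (hv : v ∈ bdryIn G P i) :
    (augment G P i ω).w u v ≤ ω u v := by
  show (if u ∈ bdryIn G P i ∧ v ∈ bdryIn G P i then
      (if G.Adj u v ∧ P u = i ∧ P v = i then min (ω u v) (G.w u v) else ω u v)
    else G.w u v) ≤ ω u v
  rw [if_pos ⟨hu, hv⟩]
  split_ifs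
  · exact min_le_left _ _
  · exact le_rfl

lemma aug_le_walk (G : WGraph V) (P : V → ι) (i : ι)
    (hov : ∀ b1 ∈ bdry G P, ∀ b2 ∈ bdry G P,
      dist (overlay G P) b1 b2 = dist G b1 b2) :
    ∀ n (l : List V), l.length ≤ n → ∀ s t : V, IsWalk G s t l → P s = i → P t = i →
      dist (augment G P i (dist (overlay G P))) s t ≤ wlen G l := by
  set H := augment G P i (dist (overlay G P)) with hH
  intro n
  induction n with
  | zero =>
    intro l hl s t hw _ _
    obtain rfl : l = [] := List.length_eq_zero_iff.mp (Nat.le_zero.mp hl)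
    simp [IsWalk] at hw
  | succ n ih =>
    intro l hl s t hw hs ht
    obtain ⟨hc, hh, hg⟩ := hw
    cases l with
    | nil => simp at hh
    | cons a l' =>
      simp only [List.head?_cons, Option.some.injEq] at hh
      obtain rfl : s = a := hh.symm
      cases l' with
      | nil =>
        simp only [List.getLast?_singleton, Option.some.injEq] at hg
        subst hg
        simp [dist_self, wlen, pairSum]
      | cons v rest =>
        have hadj_sv : G.Adj s v := (List.isChain_cons_cons.mp hc).1
        rw [List.getLast?_cons_cons] at hg
        by_cases hv : P v = i
        · -- stay inside the partition: step over the edge s-v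
          have hwalk2 : IsWalk G v t (v :: rest) :=
            ⟨(List.isChain_cons_cons.mp hc).2, rfl, hg⟩
          have hrec : dist H v t ≤ wlen G (v :: rest) :=
            ih (v :: rest) (by simpa using Nat.le_of_succ_le_succ hl) v t hwalk2 hv ht
          have hHadj : H.Adj s v := Or.inl ⟨hadj_sv, hs, hv⟩
          calc dist H s t ≤ dist H s v + dist H v t := dist_triangle H s v t
            _ ≤ H.w s v + wlen G (v :: rest) := add_le_add (dist_le_w H hHadj) hrec
            _ ≤ G.w s v + wlen G (v :: rest) :=
                add_le_add_left (augment_w_le hadj_sv hs hv) _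
            _ = wlen G (s :: v :: rest) := rfl
        · -- the walk leaves the partition at s; find the first re-entry vertex w
          have hsB : s ∈ bdryIn G P i := ⟨hs, v, hadj_sv, hv⟩
          have htmem : t ∈ v :: rest :=
            List.mem_of_mem_getLast? (Option.mem_def.mpr hg)
          obtain ⟨l1, w, l2, hsplit, hQw, hfirst⟩ :=
            exists_first_split (fun x => P x = i) (v :: rest) ⟨t, htmem, ht⟩
          have hl1ne : l1 ≠ [] := by
            rintro rfl
            simp only [List.nil_append, List.cons.injEq] at hsplit
            exact hv (hsplit.1 ▸ hQw)
          have hpne : P (l1.getLast hl1ne) ≠ i := hfirst _ (List.getLast_mem hl1ne)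
          have hldec : s :: v :: rest = (s :: l1 ++ [w]) ++ l2 := by
            rw [hsplit]; simp
          have hc' : List.Chain' G.Adj ((s :: l1 ++ [w]) ++ l2) := by
            rw [← hldec]; exact hc
          obtain ⟨hcpre, hcl2, _⟩ := List.isChain_append.mp hc'
          have hcl1w : List.Chain' G.Adj (l1 ++ w :: l2) := by
            have := hc
            rw [hsplit] at this
            exact (List.isChain_cons.mp this).2
          obtain ⟨_, hcwl2, hlink1⟩ := List.isChain_append.mp hcl1w
          have hadj_pw : G.Adj (l1.getLast hl1ne) w := by
            refine hlink1 _ ?_ w rfl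
            rw [List.getLast?_eq_getLast hl1ne]; rfl
          have hwB : w ∈ bdryIn G P i := ⟨hQw, _, G.symm hadj_pw, hpne⟩
          have hwalkpre : IsWalk G s w (s :: l1 ++ [w]) := by
            refine ⟨hcpre, ?_, ?_⟩
            · simp
            · show ((s :: l1) ++ [w]).getLast? = some w
              exact List.getLast?_concat
          have hwalksuf : IsWalk G w t (w :: l2) := by
            refine ⟨hcwl2, rfl, ?_⟩
            rw [hsplit, List.getLast?_append] at hg
            rw [List.getLast?_eq_getLast (l := w :: l2) (by simp)] at hg ⊢
            simpa using hg
          have hlen2 : (w :: l2).length ≤ n := by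
            have h1 : (s :: v :: rest).length ≤ n + 1 := hl
            rw [hldec] at h1
            simp only [List.length_append, List.length_cons] at h1 ⊢
            have h2 : 1 ≤ l1.length := List.length_pos_iff.mpr hl1ne
            omega
          have hrec : dist H w t ≤ wlen G (w :: l2) :=
            ih (w :: l2) hlen2 w t hwalksuf hQw ht
          have hHadj : H.Adj s w := Or.inr ⟨hsB, hwB⟩
          have hws : dist G s w ≤ wlen G (s :: l1 ++ [w]) := dist_le_wlen G hwalkpre
          have hov' : dist (overlay G P) s w = dist G s w :=
            hov s (bdryIn_subset_bdry G P i hsB) w (bdryIn_subset_bdry G P i hwB)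
          have hsplitlen : wlen G (s :: v :: rest)
              = wlen G (s :: l1 ++ [w]) + wlen G (w :: l2) := by
            show pairSum G.w (s :: v :: rest) = _
            rw [hldec]
            exact pairSum_append G.w w (s :: l1 ++ [w])
              (by show ((s :: l1) ++ [w]).getLast? = some w; exact List.getLast?_concat) l2
          calc dist H s t ≤ dist H s w + dist H w t := dist_triangle H s w t
            _ ≤ H.w s w + wlen G (w :: l2) := add_le_add (dist_le_w H hHadj) hrec
            _ ≤ dist (overlay G P) s w + wlen G (w :: l2) :=
                add_le_add_left (augment_w_le_omega hsB hwB) _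
            _ = dist G s w + wlen G (w :: l2) := by rw [hov']
            _ ≤ wlen G (s :: l1 ++ [w]) + wlen G (w :: l2) := add_le_add_left hws _
            _ = wlen G (s :: v :: rest) := hsplitlen.symm

end Aux

/-- Post-Boundary correctness: the partition graph augmented with
overlay boundary-pair distances answers every same-partition query exactly. -/
theorem stmt18 {V ι : Type*} (G : WGraph V) (P : V → ι) (i : ι)
    (hov : ∀ b1 ∈ bdry G P, ∀ b2 ∈ bdry G P,
      dist (overlay G P) b1 b2 = dist G b1 b2) :
    ∀ s t : V, P s = i → P t = i →
      dist (augment G P i (dist (overlay G P))) s t = dist G s t := by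
  intro s t hs ht
  refine le_antisymm ?_ ?_
  · refine le_sInf ?_
    rintro x ⟨l, hw, rfl⟩
    exact aug_le_walk G P i hov l.length l le_rfl s t hw hs ht
  · refine dist_mono_of_edge_bound ?_ s t
    intro u v hadj
    show dist G u v ≤ (if u ∈ bdryIn G P i ∧ v ∈ bdryIn G P i then
        (if G.Adj u v ∧ P u = i ∧ P v = i then
          min (dist (overlay G P) u v) (G.w u v) else dist (overlay G P) u v)
      else G.w u v)
    have hbd : u ∈ bdryIn G P i → v ∈ bdryIn G P i → dist G u v ≤ dist (overlay G P) u v := by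
      intro hu hv
      exact (hov u (bdryIn_subset_bdry G P i hu) v (bdryIn_subset_bdry G P i hv)).ge
    split_ifs with h1 h2
    · exact le_min (hbd h1.1 h1.2) (dist_le_w G h2.1)
    · exact hbd h1.1 h1.2
    · rcases hadj with ⟨h, _, _⟩ | ⟨hu, hv⟩
      · exact dist_le_w G h
      · exact absurd ⟨hu, hv⟩ h1

end PSP
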